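/- If the partitioning problem BP(d, C; w) is feasible (i.e., there is a partition of the multiset containing d copies of each weight w_1 ≥ ... ≥ w_n into bins B_1, ..., B_n with exactly d balls each and total weight of B_i at most C_i), then for every index i with 1 ≤ i ≤ n, we have C_i + C_{i+1} + ... + C_n ≥ d·(w_i + ... + w_n). -/
import Mathlib


/-- If BP(d, C; w) is feasible, then for every i with 1 ≤ i ≤ n,
C_i + ⋯ + C_n ≥ d·(w_i + ⋯ + w_n). Balls of weight w_i placed in bin j are
counted by m i j. -/
theorem necessary_conditions_of_feasible
    (n d : ℕ) (hn : 1 ≤ n) (hd : 1 ≤ d)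
    (w : ℕ → ℕ) (C : ℕ → ℤ)
    (hw : ∀ i, 1 ≤ i → i < n → w (i + 1) ≤ w i)
    (hC : ∀ i, 1 ≤ i → i < n → C (i + 1) ≤ C i)
    (m : ℕ → ℕ → ℕ)
    (hrow : ∀ i ∈ Finset.Icc 1 n, ∑ j ∈ Finset.Icc 1 n, m i j = d)
    (hcol : ∀ j ∈ Finset.Icc 1 n, ∑ i ∈ Finset.Icc 1 n, m i j = d)
    (hcap : ∀ j ∈ Finset.Icc 1 n,
      ((∑ i ∈ Finset.Icc 1 n, m i j * w i : ℕ) : ℤ) ≤ C j) :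
    ∀ i ∈ Finset.Icc 1 n,
      (d : ℤ) * ∑ j ∈ Finset.Icc i n, (w j : ℤ) ≤ ∑ j ∈ Finset.Icc i n, C j := by
  have wmono : ∀ a b, 1 ≤ a → a ≤ b → b ≤ n → w b ≤ w a := by
    intro a b ha hab hbn
    induction b, hab using Nat.le_induction with
    | base => exact le_refl _
    | succ b hb ih =>
      exact le_trans (hw b (le_trans ha hb) (Nat.lt_of_succ_le hbn))
        (ih (Nat.le_of_succ_le hbn))
  intro i hi
  obtain ⟨hi1, hin⟩ := Finset.mem_Icc.mp hi
  have hIoc : ∀ k : ℕ, Finset.Icc 1 k = Finset.Ioc 0 k := fun k => Finset.Icc_add_one_left_eq_Ioc 0 k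
  have hi1n : i - 1 ≤ n := le_trans (Nat.sub_le _ _) hin
  have hii : Finset.Icc i n = Finset.Ioc (i - 1) n := by
    rw [← Finset.Icc_add_one_left_eq_Ioc]
    congr 1
    omega
  -- a k : number of balls of weight w k placed in bins 1..(i-1)
  set a : ℕ → ℕ := fun k => ∑ j ∈ Finset.Ioc 0 (i - 1), m k j with ha
  have hsplit : ∀ k ∈ Finset.Icc 1 n, a k + ∑ j ∈ Finset.Ioc (i - 1) n, m k j = d := by
    intro k hk
    rw [ha]
    dsimp only
    rw [Finset.sum_Ioc_consecutive _ (Nat.zero_le _) hi1n, ← hIoc, hrow k hk]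
  have hale : ∀ k ∈ Finset.Icc 1 n, a k ≤ d := by
    intro k hk
    have := hsplit k hk
    omega
  have hsub : Finset.Ioc 0 (i - 1) ⊆ Finset.Icc 1 n := by
    rw [hIoc]; exact Finset.Ioc_subset_Ioc_right hi1n
  have htot : ∑ k ∈ Finset.Icc 1 n, a k = d * (i - 1) := by
    rw [ha]
    dsimp only
    rw [Finset.sum_comm]
    rw [Finset.sum_congr rfl (fun j hj => hcol j (hsub hj))]
    simp [Nat.card_Ioc, mul_comm]
  -- capacity bound
  have h1 : ∑ j ∈ Finset.Ioc (i - 1) n, ((∑ k ∈ Finset.Icc 1 n, m k j * w k : ℕ) : ℤ)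
      ≤ ∑ j ∈ Finset.Ioc (i - 1) n, C j := by
    apply Finset.sum_le_sum
    intro j hj
    apply hcap
    rw [hIoc]
    exact Finset.Ioc_subset_Ioc_left (Nat.zero_le _) hj
  have h2 : ∑ j ∈ Finset.Ioc (i - 1) n, ((∑ k ∈ Finset.Icc 1 n, m k j * w k : ℕ) : ℤ)
      = ∑ k ∈ Finset.Icc 1 n, (w k : ℤ) * ((d : ℤ) - (a k : ℤ)) := by
    push_cast
    rw [Finset.sum_comm]
    apply Finset.sum_congr rfl
    intro k hk
    rw [← Finset.sum_mul]
    have h3 : ((∑ j ∈ Finset.Ioc (i - 1) n, m k j : ℕ) : ℤ) = (d : ℤ) - (a k : ℤ) := by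
      have h4 : (a k : ℤ) + ((∑ j ∈ Finset.Ioc (i - 1) n, m k j : ℕ) : ℤ) = (d : ℤ) := by
        exact_mod_cast congrArg (Nat.cast : ℕ → ℤ) (hsplit k hk)
      linarith
    push_cast at h3
    rw [h3]
    ring
  rw [hii]
  refine le_trans ?_ h1
  rw [h2]
  -- now a pure inequality about sums of w and a
  have hsplitk : Finset.Icc 1 n = Finset.Ioc 0 (i - 1) ∪ Finset.Ioc (i - 1) n := by
    rw [hIoc, Finset.Ioc_union_Ioc_eq_Ioc (Nat.zero_le _) hi1n]
  have hdisj : Disjoint (Finset.Ioc 0 (i - 1)) (Finset.Ioc (i - 1) n) := by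
    rw [Finset.disjoint_left]
    intro x hx hx'
    rw [Finset.mem_Ioc] at hx hx'
    omega
  rw [hsplitk, Finset.sum_union hdisj]
  have hb1 : ∑ k ∈ Finset.Ioc 0 (i - 1), (w i : ℤ) * ((d : ℤ) - (a k : ℤ))
      ≤ ∑ k ∈ Finset.Ioc 0 (i - 1), (w k : ℤ) * ((d : ℤ) - (a k : ℤ)) := by
    apply Finset.sum_le_sum
    intro k hk
    rw [Finset.mem_Ioc] at hk
    have hwk : (w i : ℤ) ≤ (w k : ℤ) := by
      exact_mod_cast wmono k i hk.1 (by omega) hin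
    have hak : (0 : ℤ) ≤ (d : ℤ) - (a k : ℤ) := by
      have h5 := hale k (by rw [hIoc]; exact Finset.mem_Ioc.mpr ⟨hk.1, le_trans hk.2 hi1n⟩)
      have h6 : (a k : ℤ) ≤ (d : ℤ) := by exact_mod_cast h5
      linarith
    exact mul_le_mul_of_nonneg_right hwk hak
  have hb2 : ∑ k ∈ Finset.Ioc (i - 1) n, ((d : ℤ) * (w k : ℤ) - (w i : ℤ) * (a k : ℤ))
      ≤ ∑ k ∈ Finset.Ioc (i - 1) n, (w k : ℤ) * ((d : ℤ) - (a k : ℤ)) := by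
    apply Finset.sum_le_sum
    intro k hk
    rw [Finset.mem_Ioc] at hk
    have hwk : (w k : ℤ) ≤ (w i : ℤ) := by
      exact_mod_cast wmono i k hi1 (by omega) hk.2
    have hak : (0 : ℤ) ≤ (a k : ℤ) := Int.natCast_nonneg _
    nlinarith
  have hb3 : ∑ k ∈ Finset.Ioc 0 (i - 1), ((d : ℤ) - (a k : ℤ))
      = ∑ k ∈ Finset.Ioc (i - 1) n, (a k : ℤ) := by
    have h4 : ∑ k ∈ Finset.Ioc 0 (i - 1), (a k : ℤ) + ∑ k ∈ Finset.Ioc (i - 1) n, (a k : ℤ)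
        = (d : ℤ) * ((i : ℤ) - 1) := by
      rw [← Finset.sum_union hdisj, ← hsplitk]
      have h5 : ((∑ k ∈ Finset.Icc 1 n, a k : ℕ) : ℤ) = (d : ℤ) * ((i - 1 : ℕ) : ℤ) := by
        exact_mod_cast congrArg (Nat.cast : ℕ → ℤ) htot
      push_cast at h5 ⊢
      rw [h5]
      have h6 : ((i - 1 : ℕ) : ℤ) = (i : ℤ) - 1 := by omega
      rw [h6]
    rw [Finset.sum_sub_distrib, Finset.sum_const, Nat.card_Ioc]
    have hcard : ((i - 1 - 0 : ℕ) : ℤ) = (i : ℤ) - 1 := by omega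
    rw [nsmul_eq_mul, hcard]
    linarith
  have e1 : ∑ k ∈ Finset.Ioc 0 (i - 1), (w i : ℤ) * ((d : ℤ) - (a k : ℤ))
      = ∑ k ∈ Finset.Ioc (i - 1) n, (w i : ℤ) * (a k : ℤ) := by
    rw [← Finset.mul_sum, ← Finset.mul_sum, hb3]
  have e2 : ∑ k ∈ Finset.Ioc (i - 1) n, ((d : ℤ) * (w k : ℤ) - (w i : ℤ) * (a k : ℤ))
      = (d : ℤ) * ∑ k ∈ Finset.Ioc (i - 1) n, (w k : ℤ)
        - ∑ k ∈ Finset.Ioc (i - 1) n, (w i : ℤ) * (a k : ℤ) := by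
    rw [Finset.sum_sub_distrib, Finset.mul_sum]
  linarith [hb1, hb2, e1.symm.trans_le hb1, e2 ▸ hb2]
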